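/- Let uv be an edge of a finite simple graph G and let H be the 3-subdivision of uv, with new vertices u′, w, v′. If the edge uv is γ-critical in G, i.e., γ(G − uv) = γ(G) + 1, then the edges uu′ and v′v are γ-critical in H, i.e., γ(H − uu′) = γ(H) + 1 and γ(H − v′v) = γ(H) + 1. -/
import Mathlib


open SimpleGraph

/-- `S` is a dominating set of `G`. -/
def IsDomSet {V : Type*} (G : SimpleGraph V) (S : Finset V) : Prop :=
  ∀ v : V, v ∈ S ∨ ∃ u ∈ S, G.Adj u v

/-- The domination number `γ(G)`. -/
noncomputable def domNum {V : Type*} (G : SimpleGraph V) : ℕ :=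
  sInf {n | ∃ S : Finset V, IsDomSet G S ∧ S.card = n}

/-- `C` is a vertex cover of `G`. -/
def IsVC {V : Type*} (G : SimpleGraph V) (C : Finset V) : Prop :=
  ∀ e ∈ G.edgeSet, ∃ x ∈ C, x ∈ e

/-- The vertex cover number `τ(G)`. -/
noncomputable def tau {V : Type*} (G : SimpleGraph V) : ℕ :=
  sInf {n | ∃ C : Finset V, IsVC G C ∧ C.card = n}

/-- `S` is an independent set of `G`. -/
def IsIndep {V : Type*} (G : SimpleGraph V) (S : Finset V) : Prop :=
  ∀ a ∈ S, ∀ b ∈ S, ¬ G.Adj a b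

/-- The independence number `α(G)`. -/
noncomputable def indepNum {V : Type*} (G : SimpleGraph V) : ℕ :=
  sSup {n | ∃ S : Finset V, IsIndep G S ∧ S.card = n}

/-- The bondage number `b(G)`. -/
noncomputable def bondage {V : Type*} (G : SimpleGraph V) : ℕ :=
  sInf {n | ∃ E' : Finset (Sym2 V), ↑E' ⊆ G.edgeSet ∧ E'.card = n ∧
    domNum (G.deleteEdges ↑E') = domNum G + 1}

/-- The graph `G_v+u` obtained from `G` by adding one new vertex (`none`) adjacent only to `v`. -/
def addLeaf {V : Type*} (G : SimpleGraph V) (v : V) : SimpleGraph (Option V) :=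
  SimpleGraph.fromRel (fun x y =>
    (∃ a b, x = some a ∧ y = some b ∧ G.Adj a b) ∨ (x = some v ∧ y = none))

/-- The graph `G_A+` obtained from `G` by adding, for each `v ∈ A`, one new pendant
vertex adjacent only to `v`. -/
def addLeaves {V : Type*} (G : SimpleGraph V) (A : Finset V) :
    SimpleGraph (V ⊕ {x // x ∈ A}) :=
  SimpleGraph.fromRel (fun x y =>
    (∃ a b, x = Sum.inl a ∧ y = Sum.inl b ∧ G.Adj a b) ∨
    (∃ a : {x // x ∈ A}, x = Sum.inl a.1 ∧ y = Sum.inr a))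

/-- The `3`-subdivision of the edge `uv` of `G`: the edge `uv` is deleted, three new
vertices `u' = Sum.inr 0`, `w = Sum.inr 1`, `v' = Sum.inr 2` are added, together with the
four edges `u u'`, `u' w`, `w v'`, `v' v`. -/
def subdiv3 {V : Type*} (G : SimpleGraph V) (u v : V) : SimpleGraph (V ⊕ Fin 3) :=
  SimpleGraph.fromRel (fun x y =>
    match x, y with
    | Sum.inl a, Sum.inl b => G.Adj a b ∧ s(a, b) ≠ s(u, v)
    | Sum.inl a, Sum.inr i => (a = u ∧ i = 0) ∨ (a = v ∧ i = 2)
    | Sum.inr i, Sum.inr j => (i = 0 ∧ j = 1) ∨ (i = 1 ∧ j = 2)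
    | _, _ => False)

open Sum
set_option linter.unusedSectionVars false

section Aux
variable {V : Type*} [Fintype V] [DecidableEq V] {G : SimpleGraph V} {u v a b : V} {i j : Fin 3}

lemma domNum_le {S : Finset V} (h : IsDomSet G S) : domNum G ≤ S.card :=
  Nat.sInf_le ⟨S, h, rfl⟩

lemma exists_min_domset (G : SimpleGraph V) :
    ∃ S : Finset V, IsDomSet G S ∧ S.card = domNum G := by
  have hne : {n | ∃ S : Finset V, IsDomSet G S ∧ S.card = n}.Nonempty :=
    ⟨Finset.univ.card, Finset.univ, fun v => Or.inl (Finset.mem_univ v), rfl⟩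
  exact Nat.sInf_mem hne

lemma sub_ll : (subdiv3 G u v).Adj (inl a) (inl b) ↔ G.Adj a b ∧ s(a, b) ≠ s(u, v) := by
  simp only [subdiv3, fromRel_adj]
  constructor
  · rintro ⟨_, h | h⟩
    · exact h
    · exact ⟨h.1.symm, fun he => h.2 (by rwa [Sym2.eq_swap])⟩
  · rintro h
    exact ⟨by simp [h.1.ne], Or.inl h⟩

lemma sub_lr : (subdiv3 G u v).Adj (inl a) (inr i) ↔ (a = u ∧ i = 0) ∨ (a = v ∧ i = 2) := by
  simp [subdiv3, fromRel_adj]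

lemma sub_rl : (subdiv3 G u v).Adj (inr i) (inl a) ↔ (a = u ∧ i = 0) ∨ (a = v ∧ i = 2) := by
  rw [adj_comm]; exact sub_lr

lemma sub_rr : (subdiv3 G u v).Adj (inr i) (inr j) ↔
    (i = 0 ∧ j = 1) ∨ (i = 1 ∧ j = 2) ∨ (i = 1 ∧ j = 0) ∨ (i = 2 ∧ j = 1) := by
  simp only [subdiv3, fromRel_adj]
  constructor
  · rintro ⟨hne, h | h⟩ <;> tauto
  · rintro (⟨h1, h2⟩ | ⟨h1, h2⟩ | ⟨h1, h2⟩ | ⟨h1, h2⟩) <;> subst h1 <;> subst h2 <;>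
      refine ⟨by simp, by tauto⟩

/-- the `V`-part of a set of vertices of the subdivision -/
def leftPart (D : Finset (V ⊕ Fin 3)) : Finset V :=
  Finset.univ.filter (fun a => Sum.inl a ∈ D)

lemma mem_leftPart {D : Finset (V ⊕ Fin 3)} : a ∈ leftPart D ↔ inl a ∈ D := by
  simp [leftPart]

lemma card1 {D : Finset (V ⊕ Fin 3)} (hi : inr i ∈ D) :
    (leftPart D).card + 1 ≤ D.card := by
  have hsub : insert (inr i) ((leftPart D).image inl) ⊆ D := by
    intro x hx
    rcases Finset.mem_insert.1 hx with rfl | hx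
    · exact hi
    · obtain ⟨c, hc, rfl⟩ := Finset.mem_image.1 hx
      exact mem_leftPart.1 hc
  calc (leftPart D).card + 1
      = (insert (inr i : V ⊕ Fin 3) ((leftPart D).image inl)).card := by
        rw [Finset.card_insert_of_notMem (by simp),
          Finset.card_image_of_injective _ inl_injective]
    _ ≤ D.card := Finset.card_le_card hsub

lemma card2 {D : Finset (V ⊕ Fin 3)} (hi : inr i ∈ D) (hj : inr j ∈ D) (hij : i ≠ j) :
    (leftPart D).card + 2 ≤ D.card := by
  have hsub : insert (inr i) (insert (inr j) ((leftPart D).image inl)) ⊆ D := by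
    intro x hx
    rcases Finset.mem_insert.1 hx with rfl | hx
    · exact hi
    rcases Finset.mem_insert.1 hx with rfl | hx
    · exact hj
    obtain ⟨c, hc, rfl⟩ := Finset.mem_image.1 hx
    exact mem_leftPart.1 hc
  calc (leftPart D).card + 2
      = (insert (inr i : V ⊕ Fin 3) (insert (inr j : V ⊕ Fin 3) ((leftPart D).image inl))).card := by
        rw [Finset.card_insert_of_notMem (by simp [hij]),
          Finset.card_insert_of_notMem (by simp),
          Finset.card_image_of_injective _ inl_injective]
    _ ≤ D.card := Finset.card_le_card hsub

lemma card_insert_image (S : Finset V) (x : V ⊕ Fin 3) (hx : ∀ a, x ≠ inl a) :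
    (insert x (S.image (inl : V → V ⊕ Fin 3))).card = S.card + 1 := by
  rw [Finset.card_insert_of_notMem (by
    simp only [Finset.mem_image, not_exists]
    rintro a ⟨_, rfl⟩
    exact hx a rfl), Finset.card_image_of_injective _ inl_injective]


/-! ### Upper bound for `H` -/

lemma upperH : domNum (subdiv3 G u v) ≤ domNum G + 1 := by
  obtain ⟨S, hS, hc⟩ := exists_min_domset G
  rw [← hc]
  by_cases hu : u ∈ S
  · have hdom : IsDomSet (subdiv3 G u v) (insert (inr 2) (S.image inl)) := by
      rintro (a | i)
      · rcases hS a with h | ⟨b, hb, hba⟩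
        · exact Or.inl (Finset.mem_insert_of_mem (Finset.mem_image_of_mem _ h))
        · by_cases he : s(b, a) = s(u, v)
          · rw [Sym2.eq_iff] at he
            rcases he with ⟨rfl, rfl⟩ | ⟨rfl, rfl⟩
            · exact Or.inr ⟨inr 2, Finset.mem_insert_self _ _, sub_rl.2 (Or.inr ⟨rfl, rfl⟩)⟩
            · exact Or.inl (Finset.mem_insert_of_mem (Finset.mem_image_of_mem _ hu))
          · exact Or.inr ⟨inl b, Finset.mem_insert_of_mem (Finset.mem_image_of_mem _ hb),
              sub_ll.2 ⟨hba, he⟩⟩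
      · fin_cases i
        · exact Or.inr ⟨inl u, Finset.mem_insert_of_mem (Finset.mem_image_of_mem _ hu),
            sub_lr.2 (Or.inl ⟨rfl, rfl⟩)⟩
        · exact Or.inr ⟨inr 2, Finset.mem_insert_self _ _, sub_rr.2 (by decide)⟩
        · exact Or.inl (Finset.mem_insert_self _ _)
    have h := domNum_le hdom
    rwa [card_insert_image S _ (by simp)] at h
  · by_cases hv : v ∈ S
    · have hdom : IsDomSet (subdiv3 G u v) (insert (inr 0) (S.image inl)) := by
        rintro (a | i)
        · rcases hS a with h | ⟨b, hb, hba⟩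
          · exact Or.inl (Finset.mem_insert_of_mem (Finset.mem_image_of_mem _ h))
          · by_cases he : s(b, a) = s(u, v)
            · rw [Sym2.eq_iff] at he
              rcases he with ⟨rfl, rfl⟩ | ⟨rfl, rfl⟩
              · exact Or.inl (Finset.mem_insert_of_mem (Finset.mem_image_of_mem _ hv))
              · exact Or.inr ⟨inr 0, Finset.mem_insert_self _ _, sub_rl.2 (Or.inl ⟨rfl, rfl⟩)⟩
            · exact Or.inr ⟨inl b, Finset.mem_insert_of_mem (Finset.mem_image_of_mem _ hb),
                sub_ll.2 ⟨hba, he⟩⟩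
        · fin_cases i
          · exact Or.inl (Finset.mem_insert_self _ _)
          · exact Or.inr ⟨inr 0, Finset.mem_insert_self _ _, sub_rr.2 (by decide)⟩
          · exact Or.inr ⟨inl v, Finset.mem_insert_of_mem (Finset.mem_image_of_mem _ hv),
              sub_lr.2 (Or.inr ⟨rfl, rfl⟩)⟩
      have h := domNum_le hdom
      rwa [card_insert_image S _ (by simp)] at h
    · have hdom : IsDomSet (subdiv3 G u v) (insert (inr 1) (S.image inl)) := by
        rintro (a | i)
        · rcases hS a with h | ⟨b, hb, hba⟩
          · exact Or.inl (Finset.mem_insert_of_mem (Finset.mem_image_of_mem _ h))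
          · refine Or.inr ⟨inl b, Finset.mem_insert_of_mem (Finset.mem_image_of_mem _ hb),
              sub_ll.2 ⟨hba, ?_⟩⟩
            intro he
            rw [Sym2.eq_iff] at he
            rcases he with ⟨rfl, rfl⟩ | ⟨rfl, rfl⟩
            · exact hu hb
            · exact hv hb
        · fin_cases i
          · exact Or.inr ⟨inr 1, Finset.mem_insert_self _ _, sub_rr.2 (by decide)⟩
          · exact Or.inl (Finset.mem_insert_self _ _)
          · exact Or.inr ⟨inr 1, Finset.mem_insert_self _ _, sub_rr.2 (by decide)⟩
      have h := domNum_le hdom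
      rwa [card_insert_image S _ (by simp)] at h

/-! ### Lower bound for `H` -/

lemma lowerH (huv : G.Adj u v) : domNum G + 1 ≤ domNum (subdiv3 G u v) := by
  obtain ⟨D, hD, hc⟩ := exists_min_domset (subdiv3 G u v)
  rw [← hc]
  have hdomV : ∀ a : V, a ∈ leftPart D ∨ (∃ b ∈ leftPart D, G.Adj b a)
      ∨ (a = u ∧ inr 0 ∈ D) ∨ (a = v ∧ inr 2 ∈ D) := by
    intro a
    rcases hD (inl a) with h | ⟨x, hx, hadj⟩
    · exact Or.inl (mem_leftPart.2 h)
    rcases x with b | i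
    · rw [sub_ll] at hadj
      exact Or.inr (Or.inl ⟨b, mem_leftPart.2 hx, hadj.1⟩)
    · rw [sub_rl] at hadj
      rcases hadj with ⟨rfl, rfl⟩ | ⟨rfl, rfl⟩
      · exact Or.inr (Or.inr (Or.inl ⟨rfl, hx⟩))
      · exact Or.inr (Or.inr (Or.inr ⟨rfl, hx⟩))
  have finish : ∀ S : Finset V, IsDomSet G S → S.card + 1 ≤ D.card →
      domNum G + 1 ≤ D.card := fun S h1 h2 => le_trans (by have := domNum_le h1; omega) h2
  by_cases h0 : inr 0 ∈ D <;> by_cases h2 : inr 2 ∈ D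
  · refine finish (insert v (leftPart D)) ?_ ?_
    · intro a
      rcases hdomV a with h | ⟨b, hb, hba⟩ | ⟨rfl, _⟩ | ⟨rfl, _⟩
      · exact Or.inl (Finset.mem_insert_of_mem h)
      · exact Or.inr ⟨b, Finset.mem_insert_of_mem hb, hba⟩
      · exact Or.inr ⟨v, Finset.mem_insert_self _ _, huv.symm⟩
      · exact Or.inl (Finset.mem_insert_self _ _)
    · have hca := card2 h0 h2 (by decide)
      have hci := Finset.card_insert_le v (leftPart D)
      omega
  · by_cases h1 : inr 1 ∈ D
    · refine finish (insert u (leftPart D)) ?_ ?_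
      · intro a
        rcases hdomV a with h | ⟨b, hb, hba⟩ | ⟨rfl, _⟩ | ⟨rfl, hh⟩
        · exact Or.inl (Finset.mem_insert_of_mem h)
        · exact Or.inr ⟨b, Finset.mem_insert_of_mem hb, hba⟩
        · exact Or.inl (Finset.mem_insert_self _ _)
        · exact (h2 hh).elim
      · have hca := card2 h0 h1 (by decide)
        have hci := Finset.card_insert_le u (leftPart D)
        omega
    · have hv : v ∈ leftPart D := by
        rcases hD (inr 2) with h | ⟨x, hx, hadj⟩
        · exact (h2 h).elim
        rcases x with b | i
        · rw [sub_lr] at hadj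
          rcases hadj with ⟨rfl, hh⟩ | ⟨rfl, _⟩
          · exact absurd hh (by decide)
          · exact mem_leftPart.2 hx
        · rw [sub_rr] at hadj
          rcases hadj with ⟨rfl, hh⟩ | ⟨rfl, hh⟩ | ⟨rfl, hh⟩ | ⟨rfl, hh⟩
          · exact absurd hh (by decide)
          · exact (h1 hx).elim
          · exact absurd hh (by decide)
          · exact absurd hh (by decide)
      refine finish (leftPart D) ?_ (card1 h0)
      intro a
      rcases hdomV a with h | ⟨b, hb, hba⟩ | ⟨rfl, _⟩ | ⟨rfl, hh⟩
      · exact Or.inl h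
      · exact Or.inr ⟨b, hb, hba⟩
      · exact Or.inr ⟨v, hv, huv.symm⟩
      · exact (h2 hh).elim
  · by_cases h1 : inr 1 ∈ D
    · refine finish (insert v (leftPart D)) ?_ ?_
      · intro a
        rcases hdomV a with h | ⟨b, hb, hba⟩ | ⟨rfl, hh⟩ | ⟨rfl, _⟩
        · exact Or.inl (Finset.mem_insert_of_mem h)
        · exact Or.inr ⟨b, Finset.mem_insert_of_mem hb, hba⟩
        · exact (h0 hh).elim
        · exact Or.inl (Finset.mem_insert_self _ _)
      · have hca := card2 h1 h2 (by decide)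
        have hci := Finset.card_insert_le v (leftPart D)
        omega
    · have hu : u ∈ leftPart D := by
        rcases hD (inr 0) with h | ⟨x, hx, hadj⟩
        · exact (h0 h).elim
        rcases x with b | i
        · rw [sub_lr] at hadj
          rcases hadj with ⟨rfl, _⟩ | ⟨rfl, hh⟩
          · exact mem_leftPart.2 hx
          · exact absurd hh (by decide)
        · rw [sub_rr] at hadj
          rcases hadj with ⟨rfl, hh⟩ | ⟨rfl, hh⟩ | ⟨rfl, hh⟩ | ⟨rfl, hh⟩
          · exact absurd hh (by decide)
          · exact absurd hh (by decide)
          · exact (h1 hx).elim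
          · exact absurd hh (by decide)
      refine finish (leftPart D) ?_ (card1 h2)
      intro a
      rcases hdomV a with h | ⟨b, hb, hba⟩ | ⟨rfl, hh⟩ | ⟨rfl, _⟩
      · exact Or.inl h
      · exact Or.inr ⟨b, hb, hba⟩
      · exact (h0 hh).elim
      · exact Or.inr ⟨u, hu, huv⟩
  · have h1 : inr 1 ∈ D := by
      rcases hD (inr 1) with h | ⟨x, hx, hadj⟩
      · exact h
      rcases x with b | i
      · rw [sub_lr] at hadj
        rcases hadj with ⟨rfl, hh⟩ | ⟨rfl, hh⟩ <;> exact absurd hh (by decide)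
      · rw [sub_rr] at hadj
        rcases hadj with ⟨rfl, hh⟩ | ⟨rfl, hh⟩ | ⟨rfl, hh⟩ | ⟨rfl, hh⟩
        · exact (h0 hx).elim
        · exact absurd hh (by decide)
        · exact absurd hh (by decide)
        · exact (h2 hx).elim
    refine finish (leftPart D) ?_ (card1 h1)
    intro a
    rcases hdomV a with h | ⟨b, hb, hba⟩ | ⟨rfl, hh⟩ | ⟨rfl, hh⟩
    · exact Or.inl h
    · exact Or.inr ⟨b, hb, hba⟩
    · exact (h0 hh).elim
    · exact (h2 hh).elim


/-! ### The edge `u u'` -/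

lemma upperHu : domNum ((subdiv3 G u v).deleteEdges {s(inl u, (inr 0 : V ⊕ Fin 3))}) ≤
    domNum (G.deleteEdges {s(u, v)}) + 1 := by
  obtain ⟨S, hS, hc⟩ := exists_min_domset (G.deleteEdges {s(u, v)})
  rw [← hc]
  have hdom : IsDomSet ((subdiv3 G u v).deleteEdges {s(inl u, (inr 0 : V ⊕ Fin 3))})
      (insert (inr 1) (S.image inl)) := by
    rintro (a | i)
    · rcases hS a with h | ⟨b, hb, hadj⟩
      · exact Or.inl (Finset.mem_insert_of_mem (Finset.mem_image_of_mem _ h))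
      · refine Or.inr ⟨inl b, Finset.mem_insert_of_mem (Finset.mem_image_of_mem _ hb), ?_⟩
        rw [deleteEdges_adj, Set.mem_singleton_iff] at hadj ⊢
        exact ⟨sub_ll.2 ⟨hadj.1, by simpa using hadj.2⟩, by simp [Sym2.eq_iff]⟩
    · fin_cases i
      · refine Or.inr ⟨inr 1, Finset.mem_insert_self _ _, ?_⟩
        rw [deleteEdges_adj, Set.mem_singleton_iff]
        exact ⟨sub_rr.2 (by decide), by simp [Sym2.eq_iff]⟩
      · exact Or.inl (Finset.mem_insert_self _ _)
      · refine Or.inr ⟨inr 1, Finset.mem_insert_self _ _, ?_⟩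
        rw [deleteEdges_adj, Set.mem_singleton_iff]
        exact ⟨sub_rr.2 (by decide), by simp [Sym2.eq_iff]⟩
  have h := domNum_le hdom
  rwa [card_insert_image S _ (by simp)] at h

lemma lowerHu : domNum (G.deleteEdges {s(u, v)}) + 1 ≤
    domNum ((subdiv3 G u v).deleteEdges {s(inl u, (inr 0 : V ⊕ Fin 3))}) := by
  obtain ⟨D, hD, hc⟩ :=
    exists_min_domset ((subdiv3 G u v).deleteEdges {s(inl u, (inr 0 : V ⊕ Fin 3))})
  rw [← hc]
  have hdomV : ∀ a : V, a ∈ leftPart D ∨ (∃ b ∈ leftPart D, (G.deleteEdges {s(u, v)}).Adj b a)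
      ∨ (a = v ∧ inr 2 ∈ D) := by
    intro a
    rcases hD (inl a) with h | ⟨x, hx, hadj⟩
    · exact Or.inl (mem_leftPart.2 h)
    rw [deleteEdges_adj, Set.mem_singleton_iff] at hadj
    rcases x with b | i
    · rw [sub_ll] at hadj
      refine Or.inr (Or.inl ⟨b, mem_leftPart.2 hx, ?_⟩)
      rw [deleteEdges_adj, Set.mem_singleton_iff]
      exact ⟨hadj.1.1, hadj.1.2⟩
    · rw [sub_rl] at hadj
      rcases hadj with ⟨⟨rfl, rfl⟩ | ⟨rfl, rfl⟩, hne⟩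
      · exact (hne Sym2.eq_swap).elim
      · exact Or.inr (Or.inr ⟨rfl, hx⟩)
  have h01 : inr 0 ∈ D ∨ inr 1 ∈ D := by
    rcases hD (inr 0) with h | ⟨x, hx, hadj⟩
    · exact Or.inl h
    rw [deleteEdges_adj, Set.mem_singleton_iff] at hadj
    rcases x with b | i
    · rw [sub_lr] at hadj
      rcases hadj with ⟨⟨rfl, _⟩ | ⟨rfl, hh⟩, hne⟩
      · exact (hne rfl).elim
      · exact absurd hh (by decide)
    · rw [sub_rr] at hadj
      rcases hadj with ⟨⟨rfl, hh⟩ | ⟨rfl, hh⟩ | ⟨rfl, hh⟩ | ⟨rfl, hh⟩, _⟩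
      · exact absurd hh (by decide)
      · exact absurd hh (by decide)
      · exact Or.inr hx
      · exact absurd hh (by decide)
  by_cases h2 : inr 2 ∈ D
  · have hdom : IsDomSet (G.deleteEdges {s(u, v)}) (insert v (leftPart D)) := by
      intro a
      rcases hdomV a with h | ⟨b, hb, hba⟩ | ⟨rfl, _⟩
      · exact Or.inl (Finset.mem_insert_of_mem h)
      · exact Or.inr ⟨b, Finset.mem_insert_of_mem hb, hba⟩
      · exact Or.inl (Finset.mem_insert_self _ _)
    have hca : (leftPart D).card + 2 ≤ D.card := by
      rcases h01 with h0 | h1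
      · exact card2 h0 h2 (by decide)
      · exact card2 h1 h2 (by decide)
    have hci := Finset.card_insert_le v (leftPart D)
    have := domNum_le hdom
    omega
  · have hdom : IsDomSet (G.deleteEdges {s(u, v)}) (leftPart D) := by
      intro a
      rcases hdomV a with h | ⟨b, hb, hba⟩ | ⟨rfl, hh⟩
      · exact Or.inl h
      · exact Or.inr ⟨b, hb, hba⟩
      · exact (h2 hh).elim
    have hca : (leftPart D).card + 1 ≤ D.card := by
      rcases h01 with h0 | h1
      · exact card1 h0
      · exact card1 h1
    have := domNum_le hdom
    omega

/-! ### The edge `v' v` -/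

lemma upperHv : domNum ((subdiv3 G u v).deleteEdges {s((inr 2 : V ⊕ Fin 3), inl v)}) ≤
    domNum (G.deleteEdges {s(u, v)}) + 1 := by
  obtain ⟨S, hS, hc⟩ := exists_min_domset (G.deleteEdges {s(u, v)})
  rw [← hc]
  have hdom : IsDomSet ((subdiv3 G u v).deleteEdges {s((inr 2 : V ⊕ Fin 3), inl v)})
      (insert (inr 1) (S.image inl)) := by
    rintro (a | i)
    · rcases hS a with h | ⟨b, hb, hadj⟩
      · exact Or.inl (Finset.mem_insert_of_mem (Finset.mem_image_of_mem _ h))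
      · refine Or.inr ⟨inl b, Finset.mem_insert_of_mem (Finset.mem_image_of_mem _ hb), ?_⟩
        rw [deleteEdges_adj, Set.mem_singleton_iff] at hadj ⊢
        exact ⟨sub_ll.2 ⟨hadj.1, by simpa using hadj.2⟩, by simp [Sym2.eq_iff]⟩
    · fin_cases i
      · refine Or.inr ⟨inr 1, Finset.mem_insert_self _ _, ?_⟩
        rw [deleteEdges_adj, Set.mem_singleton_iff]
        exact ⟨sub_rr.2 (by decide), by simp [Sym2.eq_iff]⟩
      · exact Or.inl (Finset.mem_insert_self _ _)
      · refine Or.inr ⟨inr 1, Finset.mem_insert_self _ _, ?_⟩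
        rw [deleteEdges_adj, Set.mem_singleton_iff]
        exact ⟨sub_rr.2 (by decide), by simp [Sym2.eq_iff]⟩
  have h := domNum_le hdom
  rwa [card_insert_image S _ (by simp)] at h

lemma lowerHv (huv : G.Adj u v) : domNum (G.deleteEdges {s(u, v)}) + 1 ≤
    domNum ((subdiv3 G u v).deleteEdges {s((inr 2 : V ⊕ Fin 3), inl v)}) := by
  obtain ⟨D, hD, hc⟩ :=
    exists_min_domset ((subdiv3 G u v).deleteEdges {s((inr 2 : V ⊕ Fin 3), inl v)})
  rw [← hc]
  have hdomV : ∀ a : V, a ∈ leftPart D ∨ (∃ b ∈ leftPart D, (G.deleteEdges {s(u, v)}).Adj b a)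
      ∨ (a = u ∧ inr 0 ∈ D) := by
    intro a
    rcases hD (inl a) with h | ⟨x, hx, hadj⟩
    · exact Or.inl (mem_leftPart.2 h)
    rw [deleteEdges_adj, Set.mem_singleton_iff] at hadj
    rcases x with b | i
    · rw [sub_ll] at hadj
      refine Or.inr (Or.inl ⟨b, mem_leftPart.2 hx, ?_⟩)
      rw [deleteEdges_adj, Set.mem_singleton_iff]
      exact ⟨hadj.1.1, hadj.1.2⟩
    · rw [sub_rl] at hadj
      rcases hadj with ⟨⟨rfl, rfl⟩ | ⟨rfl, rfl⟩, hne⟩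
      · exact Or.inr (Or.inr ⟨rfl, hx⟩)
      · exact (hne rfl).elim
  have h12 : inr 2 ∈ D ∨ inr 1 ∈ D := by
    rcases hD (inr 2) with h | ⟨x, hx, hadj⟩
    · exact Or.inl h
    rw [deleteEdges_adj, Set.mem_singleton_iff] at hadj
    rcases x with b | i
    · rw [sub_lr] at hadj
      rcases hadj with ⟨⟨rfl, hh⟩ | ⟨rfl, _⟩, hne⟩
      · exact absurd hh (by decide)
      · exact (hne Sym2.eq_swap).elim
    · rw [sub_rr] at hadj
      rcases hadj with ⟨⟨rfl, hh⟩ | ⟨rfl, hh⟩ | ⟨rfl, hh⟩ | ⟨rfl, hh⟩, _⟩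
      · exact absurd hh (by decide)
      · exact Or.inr hx
      · exact absurd hh (by decide)
      · exact absurd hh (by decide)
  by_cases h0 : inr 0 ∈ D
  · have hdom : IsDomSet (G.deleteEdges {s(u, v)}) (insert u (leftPart D)) := by
      intro a
      rcases hdomV a with h | ⟨b, hb, hba⟩ | ⟨rfl, _⟩
      · exact Or.inl (Finset.mem_insert_of_mem h)
      · exact Or.inr ⟨b, Finset.mem_insert_of_mem hb, hba⟩
      · exact Or.inl (Finset.mem_insert_self _ _)
    have hca : (leftPart D).card + 2 ≤ D.card := by
      rcases h12 with h2 | h1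
      · exact card2 h2 h0 (by decide)
      · exact card2 h1 h0 (by decide)
    have hci := Finset.card_insert_le u (leftPart D)
    have := domNum_le hdom
    omega
  · have hdom : IsDomSet (G.deleteEdges {s(u, v)}) (leftPart D) := by
      intro a
      rcases hdomV a with h | ⟨b, hb, hba⟩ | ⟨rfl, hh⟩
      · exact Or.inl h
      · exact Or.inr ⟨b, hb, hba⟩
      · exact (h0 hh).elim
    have hca : (leftPart D).card + 1 ≤ D.card := by
      rcases h12 with h2 | h1
      · exact card1 h2
      · exact card1 h1
    have := domNum_le hdom
    omega

end Aux

/-- If the edge `uv` is `γ`-critical in `G` and `H` is the `3`-subdivision of `uv`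
(with new vertices `u' = Sum.inr 0`, `w = Sum.inr 1`, `v' = Sum.inr 2`), then the
edges `u u'` and `v' v` are `γ`-critical in `H`. -/


theorem stmt7 {V : Type*} [Fintype V] [DecidableEq V] (G : SimpleGraph V)
    (u v : V) (huv : G.Adj u v)
    (hcrit : domNum (G.deleteEdges {s(u, v)}) = domNum G + 1) :
    domNum ((subdiv3 G u v).deleteEdges {s(Sum.inl u, (Sum.inr 0 : V ⊕ Fin 3))}) =
        domNum (subdiv3 G u v) + 1 ∧
    domNum ((subdiv3 G u v).deleteEdges {s((Sum.inr 2 : V ⊕ Fin 3), Sum.inl v)}) =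
        domNum (subdiv3 G u v) + 1 := by
  have hH : domNum (subdiv3 G u v) = domNum G + 1 := le_antisymm upperH (lowerH huv)
  have hu' : domNum ((subdiv3 G u v).deleteEdges {s(Sum.inl u, (Sum.inr 0 : V ⊕ Fin 3))}) =
      domNum (G.deleteEdges {s(u, v)}) + 1 := le_antisymm upperHu lowerHu
  have hv' : domNum ((subdiv3 G u v).deleteEdges {s((Sum.inr 2 : V ⊕ Fin 3), Sum.inl v)}) =
      domNum (G.deleteEdges {s(u, v)}) + 1 := le_antisymm upperHv (lowerHv huv)
  omega
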